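/- Spiked model: let Σ = Σ_≤ + Σ_> with Σ_≤ symmetric PSD of rank r whose nonzero eigenvalues all equal μ > 0, and Σ_> symmetric PSD with Σ_> ⪯ ηI, and suppose Σ_≤ Σ_> = 0 (orthogonal ranges). Then for every λ > 0 and θ* ∈ ℝ^d: λ (θ*)ᵀΣ(Σ+λI)^{-1}θ* ≤ (λ/μ)‖θ*‖²_Σ + η‖θ*_>‖₂², where θ*_> is the orthogonal projection of θ* onto the range of Σ_>. Moreover μ ≥ (Tr(Σ) − dη)/r. -/

import Mathlib

open Matrix

private lemma quad_nonneg {d : ℕ} {P : Matrix (Fin d) (Fin d) ℝ} (hP : P.PosSemidef)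
    (x : Fin d → ℝ) : 0 ≤ x ⬝ᵥ P.mulVec x := by simpa using hP.dotProduct_mulVec_nonneg x

private lemma sq_eq_smul {d : ℕ} (Sle : Matrix (Fin d) (Fin d) ℝ) (hle : Sle.PosSemidef)
    (μ0 : ℝ) (heig : ∀ i, hle.1.eigenvalues i = 0 ∨ hle.1.eigenvalues i = μ0) :
    Sle * Sle = μ0 • Sle := by
  have hs := hle.1.spectral_theorem
  rw [Unitary.conjStarAlgAut_apply] at hs
  set U : Matrix (Fin d) (Fin d) ℝ := (hle.1.eigenvectorUnitary : Matrix (Fin d) (Fin d) ℝ) with hU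
  set D : Matrix (Fin d) (Fin d) ℝ := diagonal (RCLike.ofReal ∘ hle.1.eigenvalues) with hD
  have hUU : star U * U = 1 := by
    rw [hU]; exact (Matrix.mem_unitaryGroup_iff').mp hle.1.eigenvectorUnitary.2
  have hdd : D * D = μ0 • D := by
    rw [hD, diagonal_mul_diagonal]
    ext i j
    by_cases hij : i = j
    · subst hij
      rcases heig i with h | h <;> simp [diagonal, h, mul_comm]
    · simp [diagonal, hij]
  calc Sle * Sle = U * D * (star U * U) * D * star U := by
        rw [hs]; noncomm_ring
    _ = μ0 • Sle := by
        rw [hUU, mul_one, mul_assoc, mul_assoc, ← mul_assoc D, hdd, hs]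
        simp only [Matrix.mul_smul, Matrix.smul_mul, mul_assoc]

private lemma trace_eq_sum_eig {d : ℕ} (Sle : Matrix (Fin d) (Fin d) ℝ) (hle : Sle.PosSemidef) :
    Sle.trace = ∑ i, hle.1.eigenvalues i := by
  have hs := hle.1.spectral_theorem
  rw [Unitary.conjStarAlgAut_apply] at hs
  set U : Matrix (Fin d) (Fin d) ℝ := (hle.1.eigenvectorUnitary : Matrix (Fin d) (Fin d) ℝ) with hU
  set D : Matrix (Fin d) (Fin d) ℝ := diagonal (RCLike.ofReal ∘ hle.1.eigenvalues) with hD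
  have hUU : star U * U = 1 := by
    rw [hU]; exact (Matrix.mem_unitaryGroup_iff').mp hle.1.eigenvectorUnitary.2
  calc Sle.trace = (U * D * star U).trace := by rw [← hs]
    _ = (star U * U * D).trace := by rw [Matrix.trace_mul_cycle]
    _ = D.trace := by rw [hUU, one_mul]
    _ = ∑ i, hle.1.eigenvalues i := by
        rw [hD, trace_diagonal]
        simp

theorem stmt17 {d : ℕ} (r : ℕ)
    (Sle Sgt : Matrix (Fin d) (Fin d) ℝ)
    (hle : Sle.PosSemidef) (hgt : Sgt.PosSemidef)
    (hrank : Sle.rank = r)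
    (μ0 : ℝ) (hμ0 : 0 < μ0)
    (heig : ∀ i, hle.1.eigenvalues i = 0 ∨ hle.1.eigenvalues i = μ0)
    (η : ℝ) (hη : (η • (1 : Matrix (Fin d) (Fin d) ℝ) - Sgt).PosSemidef)
    (horth : Sle * Sgt = 0)
    (lam : ℝ) (hlam : 0 < lam)
    (θ θgt : Fin d → ℝ)
    (hrange : ∃ w, Sgt.mulVec w = θgt)
    (hproj : ∀ w, (θ - θgt) ⬝ᵥ Sgt.mulVec w = 0) :
    lam * (θ ⬝ᵥ ((Sle + Sgt) * (Sle + Sgt + lam • 1)⁻¹).mulVec θ) ≤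
        (lam / μ0) * (θ ⬝ᵥ (Sle + Sgt).mulVec θ) + η * ∑ j, θgt j ^ 2 ∧
      ((Sle + Sgt).trace - d * η) / r ≤ μ0 := by
  set M : Matrix (Fin d) (Fin d) ℝ := Sle + Sgt + lam • 1 with hMdef
  -- basic positivity
  have hSpsd : (Sle + Sgt).PosSemidef := hle.add hgt
  have hlam1 : ((lam • 1 : Matrix (Fin d) (Fin d) ℝ)).PosDef := by
    rw [smul_one_eq_diagonal]
    exact Matrix.PosDef.diagonal (fun _ => hlam)
  have hM : M.PosDef := Matrix.PosDef.posSemidef_add hSpsd hlam1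
  have hdet : IsUnit M.det := hM.det_pos.ne'.isUnit
  have hMMinv : M * M⁻¹ = 1 := mul_nonsing_inv _ hdet
  have hMinvM : M⁻¹ * M = 1 := nonsing_inv_mul _ hdet
  -- orthogonality both ways
  have hgtle : Sgt * Sle = 0 := by
    have h := congrArg conjTranspose horth
    rwa [conjTranspose_mul, hgt.1, hle.1, conjTranspose_zero] at h
  have hSle2 : Sle * Sle = μ0 • Sle := sq_eq_smul Sle hle μ0 heig
  have hml : μ0 + lam ≠ 0 := by positivity
  -- Sle * M⁻¹ = (μ0+lam)⁻¹ • Sle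
  have hSleM : Sle * M = (μ0 + lam) • Sle := by
    rw [hMdef, mul_add, mul_add, hSle2, horth, Matrix.mul_smul, mul_one, add_smul, add_zero]
  have hSleMinv' : (μ0 + lam) • (Sle * M⁻¹) = Sle := by
    rw [← Matrix.smul_mul, ← hSleM, mul_assoc, hMMinv, mul_one]
  have hSleMinv : Sle * M⁻¹ = (μ0 + lam)⁻¹ • Sle := by
    calc Sle * M⁻¹ = (μ0 + lam)⁻¹ • ((μ0 + lam) • (Sle * M⁻¹)) := by
          rw [smul_smul, inv_mul_cancel₀ hml, one_smul]
      _ = (μ0 + lam)⁻¹ • Sle := by rw [hSleMinv']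
  -- Sgt commutes with M and M⁻¹
  have hSgtM : Sgt * M = M * Sgt := by
    rw [hMdef]
    simp only [mul_add, add_mul, hgtle, horth, Matrix.mul_smul, Matrix.smul_mul, mul_one, one_mul]
  have hcomm : Sgt * M⁻¹ = M⁻¹ * Sgt := by
    calc Sgt * M⁻¹ = M⁻¹ * M * (Sgt * M⁻¹) := by rw [hMinvM, one_mul]
      _ = M⁻¹ * (M * Sgt) * M⁻¹ := by noncomm_ring
      _ = M⁻¹ * (Sgt * M) * M⁻¹ := by rw [hSgtM]
      _ = M⁻¹ * Sgt * (M * M⁻¹) := by noncomm_ring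
      _ = M⁻¹ * Sgt := by rw [hMMinv, mul_one]
  -- Sgt - lam • Sgt M⁻¹ is PSD
  have hdiff_eq : Sgt - lam • (Sgt * M⁻¹) = Sgtᴴ * M⁻¹ * Sgt := by
    have h1 : Sgt * M * M⁻¹ = Sgt := by rw [mul_assoc, hMMinv, mul_one]
    calc Sgt - lam • (Sgt * M⁻¹)
        = Sgt * M * M⁻¹ - lam • (Sgt * M⁻¹) := by rw [h1]
      _ = (Sgt * M - lam • Sgt) * M⁻¹ := by
          rw [Matrix.sub_mul, Matrix.smul_mul]
      _ = (Sgt * Sgt) * M⁻¹ := by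
          congr 1
          rw [hMdef]
          simp only [mul_add, hgtle, Matrix.mul_smul, mul_one]
          abel
      _ = Sgt * (M⁻¹ * Sgt) := by rw [mul_assoc, hcomm]
      _ = Sgtᴴ * M⁻¹ * Sgt := by rw [hgt.1, mul_assoc]
  have hdiff : (Sgt - lam • (Sgt * M⁻¹)).PosSemidef := by
    rw [hdiff_eq]
    exact (hM.inv.posSemidef).conjTranspose_mul_mul_same Sgt
  -- Sgt annihilates θ - θgt
  have hsymm : Sgtᵀ = Sgt := hgt.1
  have hSgtv : Sgt *ᵥ (θ - θgt) = 0 := by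
    funext i
    have h := hproj (Pi.single i 1)
    rw [Matrix.dotProduct_mulVec] at h
    have hv : (θ - θgt) ᵥ* Sgt = Sgt *ᵥ (θ - θgt) := by
      rw [← hsymm, Matrix.vecMul_transpose, hsymm]
    rw [hv] at h
    simpa using h
  -- reduction of the Sgt quadratic form to θgt
  have hred : θ ⬝ᵥ (Sgt * M⁻¹) *ᵥ θ = θgt ⬝ᵥ (Sgt * M⁻¹) *ᵥ θgt := by
    have hθ : θ = θgt + (θ - θgt) := by abel
    have hz : (Sgt * M⁻¹) *ᵥ (θ - θgt) = 0 := by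
      rw [hcomm, ← Matrix.mulVec_mulVec, hSgtv, Matrix.mulVec_zero]
    have hcross : (θ - θgt) ⬝ᵥ (Sgt * M⁻¹) *ᵥ θgt = 0 := by
      rw [← Matrix.mulVec_mulVec]
      exact hproj _
    conv_lhs => rw [hθ]
    rw [Matrix.mulVec_add, hz, add_zero, add_dotProduct, hcross, add_zero]
  -- quadratic form bounds
  have hq1 : θgt ⬝ᵥ (lam • (Sgt * M⁻¹)) *ᵥ θgt ≤ θgt ⬝ᵥ Sgt *ᵥ θgt := by
    have h := quad_nonneg hdiff θgt
    rw [Matrix.sub_mulVec, dotProduct_sub] at h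
    linarith
  have hq2 : θgt ⬝ᵥ Sgt *ᵥ θgt ≤ η * ∑ j, θgt j ^ 2 := by
    have h := quad_nonneg hη θgt
    rw [Matrix.sub_mulVec, dotProduct_sub, Matrix.smul_mulVec, Matrix.one_mulVec,
      dotProduct_smul, smul_eq_mul] at h
    have hdp : θgt ⬝ᵥ θgt = ∑ j, θgt j ^ 2 := by
      simp [dotProduct, pow_two]
    rw [hdp] at h
    linarith
  have hqle : 0 ≤ θ ⬝ᵥ Sle *ᵥ θ := quad_nonneg hle θ
  have hqgt : 0 ≤ θ ⬝ᵥ Sgt *ᵥ θ := quad_nonneg hgt θ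
  constructor
  · -- main inequality
    have hsplit : ((Sle + Sgt) * M⁻¹) = Sle * M⁻¹ + Sgt * M⁻¹ := Matrix.add_mul _ _ _
    have hLHS : θ ⬝ᵥ ((Sle + Sgt) * M⁻¹) *ᵥ θ
        = (μ0 + lam)⁻¹ * (θ ⬝ᵥ Sle *ᵥ θ) + θgt ⬝ᵥ (Sgt * M⁻¹) *ᵥ θgt := by
      rw [hsplit, Matrix.add_mulVec, dotProduct_add, hSleMinv, Matrix.smul_mulVec,
        dotProduct_smul, hred]
      rfl
    rw [hLHS]
    have hRHS : θ ⬝ᵥ (Sle + Sgt) *ᵥ θ = θ ⬝ᵥ Sle *ᵥ θ + θ ⬝ᵥ Sgt *ᵥ θ := by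
      rw [Matrix.add_mulVec, dotProduct_add]
    rw [hRHS]
    have hlamq : lam * (θgt ⬝ᵥ (Sgt * M⁻¹) *ᵥ θgt) ≤ η * ∑ j, θgt j ^ 2 := by
      have : θgt ⬝ᵥ (lam • (Sgt * M⁻¹)) *ᵥ θgt = lam * (θgt ⬝ᵥ (Sgt * M⁻¹) *ᵥ θgt) := by
        rw [Matrix.smul_mulVec, dotProduct_smul]; rfl
      linarith [hq1, hq2, this.symm.le]
    have hspike : lam * ((μ0 + lam)⁻¹ * (θ ⬝ᵥ Sle *ᵥ θ)) ≤ (lam / μ0) * (θ ⬝ᵥ Sle *ᵥ θ) := by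
      have hc : lam * (μ0 + lam)⁻¹ ≤ lam / μ0 := by
        rw [div_eq_mul_inv]
        have : (μ0 + lam)⁻¹ ≤ μ0⁻¹ := by
          apply inv_anti₀ hμ0
          linarith
        nlinarith
      calc lam * ((μ0 + lam)⁻¹ * (θ ⬝ᵥ Sle *ᵥ θ)) = (lam * (μ0 + lam)⁻¹) * (θ ⬝ᵥ Sle *ᵥ θ) := by
            ring
        _ ≤ (lam / μ0) * (θ ⬝ᵥ Sle *ᵥ θ) := mul_le_mul_of_nonneg_right hc hqle
    have hmono : (lam / μ0) * (θ ⬝ᵥ Sle *ᵥ θ) ≤ (lam / μ0) * (θ ⬝ᵥ Sle *ᵥ θ + θ ⬝ᵥ Sgt *ᵥ θ) := by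
      have hpos : 0 ≤ lam / μ0 := by positivity
      nlinarith
    nlinarith [hlamq, hspike, hmono]
  · -- trace bound
    have htrle : Sle.trace = r * μ0 := by
      rw [trace_eq_sum_eig Sle hle]
      have hcard : (Finset.univ.filter (fun i => hle.1.eigenvalues i ≠ 0)).card = r := by
        rw [← Fintype.card_subtype, ← hle.1.rank_eq_card_non_zero_eigs, hrank]
      calc ∑ i, hle.1.eigenvalues i
          = ∑ i ∈ Finset.univ.filter (fun i => hle.1.eigenvalues i ≠ 0), hle.1.eigenvalues i := by
            rw [Finset.sum_filter_ne_zero]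
        _ = ∑ i ∈ Finset.univ.filter (fun i => hle.1.eigenvalues i ≠ 0), μ0 := by
            apply Finset.sum_congr rfl
            intro i hi
            rcases heig i with h | h
            · exact absurd h (Finset.mem_filter.mp hi).2
            · exact h
        _ = r * μ0 := by rw [Finset.sum_const, hcard]; simp [mul_comm]
    have htrgt : Sgt.trace ≤ d * η := by
      have hdiag : ∀ i, Sgt i i ≤ η := by
        intro i
        have h := quad_nonneg hη (Pi.single i 1)
        rw [Matrix.sub_mulVec, dotProduct_sub, Matrix.smul_mulVec, Matrix.one_mulVec,
          dotProduct_smul] at h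
        simp [Matrix.mulVec_single, dotProduct, Pi.single_apply] at h
        linarith
      calc Sgt.trace = ∑ i, Sgt i i := by simp [Matrix.trace, Matrix.diag]
        _ ≤ ∑ _i : Fin d, η := Finset.sum_le_sum (fun i _ => hdiag i)
        _ = d * η := by simp [mul_comm]
    have htr : (Sle + Sgt).trace = Sle.trace + Sgt.trace := trace_add _ _
    rcases Nat.eq_zero_or_pos r with hr | hr
    · subst hr
      simp only [Nat.cast_zero, div_zero]
      exact hμ0.le
    · have hr' : (0 : ℝ) < r := by exact_mod_cast hr
      rw [div_le_iff₀ hr']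
      rw [htr, htrle]
      nlinarith [htrgt]
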